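/- Let X, Y be nonempty metric spaces and f : X → Y a rough isometry. Then d∞(X) = d∞(Y). -/

import Mathlib

open Metric Filter Topology Set

/-- Logarithm of an extended natural number, valued in `EReal` (`⊤` for `⊤`). -/
noncomputable def elog (n : ℕ∞) : EReal :=
  if n = ⊤ then ⊤ else ((Real.log (n.toNat : ℝ) : ℝ) : EReal)

/-- `coverNum r Ω` : the least number of open balls of radius `r` needed to cover `Ω`,
valued in `ℕ∞` (it is `⊤` if no finite cover exists). -/
noncomputable def coverNum {X : Type*} [MetricSpace X] (r : ℝ) (Ω : Set X) : ℕ∞ :=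
  sInf ((fun s : Finset X => (s.card : ℕ∞)) ''
    {s : Finset X | Ω ⊆ ⋃ x ∈ s, Metric.ball x r})

/-- The asymptotic dimension with base point `x`:
`d∞(X) = lim_{r→∞} limsup_{R→∞} log n_r(B(x,R)) / log R`; the limit in `r` exists since the
inner expression is nonincreasing in `r`, hence equals the infimum over `r > 0`. -/
noncomputable def asympDim {X : Type*} [MetricSpace X] (x : X) : EReal :=
  ⨅ (r : ℝ) (_ : 0 < r),
    Filter.limsup (fun R : ℝ => ((Real.log R)⁻¹ : EReal) * elog (coverNum r (Metric.ball x R)))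
      Filter.atTop

/-- The asymptotic dimension of a metric space (independent of the base point). -/
noncomputable def asympDimSpace (X : Type*) [MetricSpace X] : EReal :=
  ⨆ x : X, asympDim x

/-- A rough isometry between metric spaces. -/
def IsRoughIsometry {X Y : Type*} [MetricSpace X] [MetricSpace Y] (f : X → Y) : Prop :=
  ∃ a b ε : ℝ, 1 ≤ a ∧ 0 ≤ b ∧ 0 ≤ ε ∧
    (∀ x₁ x₂ : X, a⁻¹ * dist x₁ x₂ - b ≤ dist (f x₁) (f x₂) ∧
      dist (f x₁) (f x₂) ≤ a * dist x₁ x₂ + b) ∧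
    (∀ y : Y, ∃ x : X, dist y (f x) ≤ ε)

lemma coverNum_le_card {X : Type*} [MetricSpace X] {r : ℝ} {Ω : Set X} {s : Finset X}
    (h : Ω ⊆ ⋃ x ∈ s, Metric.ball x r) : coverNum r Ω ≤ s.card :=
  sInf_le ⟨s, h, rfl⟩

lemma coverNum_mono {X : Type*} [MetricSpace X] {r : ℝ} {Ω₁ Ω₂ : Set X} (h : Ω₁ ⊆ Ω₂) :
    coverNum r Ω₁ ≤ coverNum r Ω₂ :=
  sInf_le_sInf (Set.image_mono fun _ hs => h.trans hs)

lemma one_le_coverNum {X : Type*} [MetricSpace X] {r : ℝ} {Ω : Set X} (h : Ω.Nonempty) :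
    1 ≤ coverNum r Ω := by
  apply le_sInf
  rintro _ ⟨s, hs, rfl⟩
  rcases h with ⟨p, hp⟩
  have := hs hp
  simp only [Set.mem_iUnion] at this
  rcases this with ⟨z, hz, _⟩
  show (1:ℕ∞) ≤ (s.card : ℕ∞)
  exact_mod_cast Nat.one_le_iff_ne_zero.2 (Finset.card_ne_zero_of_mem hz)

lemma elog_mono : Monotone elog := by
  intro m n h
  unfold elog
  rcases eq_or_ne n ⊤ with rfl | hn
  · simp
  · have hm : m ≠ ⊤ := fun h' => hn (top_le_iff.1 (h' ▸ h))
    rw [if_neg hm, if_neg hn]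
    have hmn : m.toNat ≤ n.toNat := ENat.toNat_le_toNat h hn
    rw [EReal.coe_le_coe_iff]
    rcases Nat.eq_zero_or_pos m.toNat with h0 | h0
    · rw [h0]
      simp only [Nat.cast_zero, Real.log_zero]
      rcases Nat.eq_zero_or_pos n.toNat with h1 | h1
      · simp [h1]
      · exact Real.log_nonneg (by exact_mod_cast h1)
    · exact Real.log_le_log (by exact_mod_cast h0) (by exact_mod_cast hmn)

lemma elog_nonneg {n : ℕ∞} (h : 1 ≤ n) : 0 ≤ elog n := by
  have h1 : elog 1 = 0 := by
    simp [elog]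
  calc (0:EReal) = elog 1 := h1.symm
  _ ≤ elog n := elog_mono h

lemma coverNum_ball_le {X Y : Type*} [MetricSpace X] [MetricSpace Y]
    (f : X → Y) {a b ε : ℝ} (ha : 1 ≤ a) (hb : 0 ≤ b) (hε : 0 ≤ ε)
    (hiso : ∀ x₁ x₂ : X, a⁻¹ * dist x₁ x₂ - b ≤ dist (f x₁) (f x₂) ∧
      dist (f x₁) (f x₂) ≤ a * dist x₁ x₂ + b)
    (hsurj : ∀ y : Y, ∃ x : X, dist y (f x) ≤ ε)
    (x : X) (y : Y) (r' R : ℝ) :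
    coverNum (a * r' + b + ε + 1) (Metric.ball y R) ≤
      coverNum r' (Metric.ball x (a * (R + dist (f x) y + ε + b) + 1)) := by
  classical
  have ha0 : (0:ℝ) < a := lt_of_lt_of_le one_pos ha
  have hainv : a * a⁻¹ = 1 := mul_inv_cancel₀ ha0.ne'
  apply le_sInf
  rintro _ ⟨s, hs, rfl⟩
  have hcard : ((s.image f).card : ℕ∞) ≤ ((fun s : Finset X => (s.card : ℕ∞)) s) := by
    simp only []
    exact_mod_cast Finset.card_image_le (f := f) (s := s)
  refine le_trans (coverNum_le_card (s := s.image f) ?_) hcard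
  intro y' hy'
  obtain ⟨x', hx'⟩ := hsurj y'
  rw [Metric.mem_ball] at hy'
  have hx'mem : x' ∈ Metric.ball x (a * (R + dist (f x) y + ε + b) + 1) := by
    rw [Metric.mem_ball, dist_comm]
    have h1 := (hiso x x').1
    have h2 : dist (f x) (f x') ≤ dist (f x) y + dist y y' + dist y' (f x') :=
      dist_triangle4 _ _ _ _
    have h3 : dist y y' < R := by rw [dist_comm]; exact hy'
    have h5 := mul_le_mul_of_nonneg_left (sub_le_iff_le_add.1 h1) ha0.le
    nlinarith [dist_nonneg (x := x) (y := x')]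
  have := hs hx'mem
  simp only [Set.mem_iUnion] at this
  obtain ⟨z, hz, hxz⟩ := this
  rw [Metric.mem_ball] at hxz
  simp only [Set.mem_iUnion]
  refine ⟨f z, Finset.mem_image_of_mem f hz, ?_⟩
  rw [Metric.mem_ball]
  have h4 : dist y' (f z) ≤ dist y' (f x') + dist (f x') (f z) := dist_triangle _ _ _
  have h6 := (hiso x' z).2
  have h7 : a * dist x' z < a * r' := by
    exact (mul_lt_mul_iff_right₀ ha0).2 hxz
  linarith

lemma asympDim_le_of_rough {X Y : Type*} [MetricSpace X] [MetricSpace Y]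
    (f : X → Y) (hf : IsRoughIsometry f) (x : X) (y : Y) :
    asympDim y ≤ asympDim x := by
  obtain ⟨a, b, ε, ha, hb, hε, hiso, hsurj⟩ := hf
  have ha0 : (0:ℝ) < a := lt_of_lt_of_le one_pos ha
  rw [asympDim]
  refine le_iInf fun r' => le_iInf fun hr' => ?_
  set F : ℝ → EReal :=
    fun R => ((Real.log R)⁻¹ : EReal) * elog (coverNum r' (Metric.ball x R)) with hF
  set L : EReal := Filter.limsup F Filter.atTop with hLdef
  -- Step 0 : 0 ≤ L
  have hL0 : (0:EReal) ≤ L := by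
    apply le_limsup_of_frequently_le'
    apply Filter.Eventually.frequently
    filter_upwards [Filter.eventually_gt_atTop (1:ℝ)] with R hR
    have hlog : (0:ℝ) < Real.log R := Real.log_pos hR
    have h1 : (1:ℕ∞) ≤ coverNum r' (Metric.ball x R) :=
      one_le_coverNum ⟨x, Metric.mem_ball_self (lt_trans one_pos hR)⟩
    refine mul_nonneg ?_ (elog_nonneg h1)
    rw [← EReal.coe_inv]
    exact_mod_cast inv_nonneg.2 hlog.le
  -- Step 1 : asympDim y ≤ lam * L for every lam > 1
  have key : ∀ lam : ℝ, 1 < lam → asympDim y ≤ (lam : EReal) * L := by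
    intro lam hlam
    have hlam0 : (0:ℝ) < lam := lt_trans one_pos hlam
    set r : ℝ := a * r' + b + ε + 1 with hr
    have hrpos : 0 < r := by nlinarith
    have step1 : asympDim y ≤
        Filter.limsup (fun R : ℝ =>
          ((Real.log R)⁻¹ : EReal) * elog (coverNum r (Metric.ball y R))) Filter.atTop :=
      iInf₂_le r hrpos
    refine step1.trans ?_
    -- eventual bound
    set C : ℝ := a * (dist (f x) y + ε + b) + 1 with hC
    have hev : ∀ᶠ R : ℝ in Filter.atTop,
        ((Real.log R)⁻¹ : EReal) * elog (coverNum r (Metric.ball y R)) ≤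
          (lam : EReal) * F (R ^ lam) := by
      have h2 : Filter.Tendsto (fun R : ℝ => R ^ (lam - 1)) Filter.atTop Filter.atTop :=
        tendsto_rpow_atTop (by linarith)
      filter_upwards [Filter.eventually_gt_atTop (1:ℝ),
        h2.eventually_ge_atTop (a + 1), Filter.eventually_ge_atTop C] with R hR1 hR2 hR3
      have hRpos : (0:ℝ) < R := lt_trans one_pos hR1
      have hlog : (0:ℝ) < Real.log R := Real.log_pos hR1
      have hsplit : R ^ lam = R ^ (lam - 1) * R := by
        rw [← Real.rpow_add_one hRpos.ne' (lam - 1)]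
        ring_nf
      have hRlam : a * (R + dist (f x) y + ε + b) + 1 ≤ R ^ lam := by
        have h4 : (a + 1) * R ≤ R ^ (lam - 1) * R :=
          mul_le_mul_of_nonneg_right hR2 hRpos.le
        rw [hsplit]
        nlinarith
      have t1 : coverNum r (Metric.ball y R) ≤ coverNum r' (Metric.ball x (R ^ lam)) :=
        le_trans (coverNum_ball_le f ha hb hε hiso hsurj x y r' R)
          (coverNum_mono (Metric.ball_subset_ball (by linarith)))
      have t2 : ((Real.log R)⁻¹ : EReal) * elog (coverNum r (Metric.ball y R)) ≤
          ((Real.log R)⁻¹ : EReal) * elog (coverNum r' (Metric.ball x (R ^ lam))) := by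
        apply mul_le_mul_of_nonneg_left (elog_mono t1)
        rw [← EReal.coe_inv]
        exact_mod_cast inv_nonneg.2 hlog.le
      refine t2.trans (le_of_eq ?_)
      have hcoe : ((Real.log R)⁻¹ : EReal) = (lam : EReal) * ((Real.log (R ^ lam))⁻¹ : EReal) := by
        rw [← EReal.coe_inv, ← EReal.coe_inv, ← EReal.coe_mul]
        congr 1
        rw [Real.log_rpow hRpos, mul_inv]
        field_simp
      rw [hF]
      simp only []
      rw [hcoe, mul_assoc]
    -- pass to limsup
    refine (limsup_le_limsup hev).trans ?_
    have hcomp : (fun R : ℝ => (lam : EReal) * F (R ^ lam)) =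
        (fun S : ℝ => (lam : EReal) * F S) ∘ (fun R : ℝ => R ^ lam) := rfl
    rw [hcomp, Filter.limsup_comp]
    have hmaple : Filter.map (fun R : ℝ => R ^ lam) Filter.atTop ≤ Filter.atTop :=
      tendsto_rpow_atTop hlam0
    refine (limsup_le_limsup_of_le hmaple).trans (le_of_eq ?_)
    have hmono : Monotone (fun z : EReal => (lam : EReal) * z) :=
      fun z w h => mul_le_mul_of_nonneg_left h (by exact_mod_cast hlam0.le)
    have hcont : ContinuousAt (fun z : EReal => (lam : EReal) * z) L := by
      have h := EReal.continuousAt_mul (p := ((lam : EReal), L))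
        (Or.inl (by simp only []; exact_mod_cast hlam0.ne'))
        (Or.inl (by simp only []; exact_mod_cast hlam0.ne'))
        (Or.inl (EReal.coe_ne_bot lam)) (Or.inl (EReal.coe_ne_top lam))
      exact h.comp (Continuous.continuousAt (by fun_prop))
    have heq := hmono.map_limsup_of_continuousAt F hcont
    rw [hLdef, heq]
    rfl
  -- Step 2 : conclude
  by_contra hcon
  push_neg at hcon
  have hLne : L ≠ ⊤ := fun h => absurd hcon (by simp [h])
  have hLnb : L ≠ ⊥ := fun h => absurd hL0 (by simp [h])
  obtain ⟨w, hw1, hw2⟩ := EReal.lt_iff_exists_real_btwn.1 hcon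
  set Lr : ℝ := L.toReal with hLr
  have hLcoe : L = (Lr : EReal) := (EReal.coe_toReal hLne hLnb).symm
  have hLr0 : 0 ≤ Lr := by
    rw [hLcoe] at hL0; exact_mod_cast hL0
  have hLrw : Lr < w := by
    rw [hLcoe] at hw1; exact_mod_cast hw1
  set lam : ℝ := 1 + (w - Lr) / (Lr + 1) with hlam
  have hlam1 : 1 < lam := by
    rw [hlam]
    have : 0 < (w - Lr) / (Lr + 1) := div_pos (by linarith) (by linarith)
    linarith
  have hkey := key lam hlam1
  have : (lam : EReal) * L ≤ (w : EReal) := by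
    rw [hLcoe, ← EReal.coe_mul]
    apply EReal.coe_le_coe_iff.2
    rw [hlam]
    have h1 : (w - Lr) / (Lr + 1) * Lr ≤ (w - Lr) := by
      rw [div_mul_eq_mul_div, div_le_iff₀ (by linarith : (0:ℝ) < Lr + 1)]
      nlinarith
    nlinarith
  exact absurd (hkey.trans this) (not_le.2 hw2)

lemma exists_rough_inverse {X Y : Type*} [MetricSpace X] [MetricSpace Y]
    (f : X → Y) (hf : IsRoughIsometry f) : ∃ g : Y → X, IsRoughIsometry g := by
  obtain ⟨a, b, ε, ha, hb, hε, hiso, hsurj⟩ := hf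
  have ha0 : (0:ℝ) < a := lt_of_lt_of_le one_pos ha
  have hainv : a * a⁻¹ = 1 := mul_inv_cancel₀ ha0.ne'
  have hainv_le : a⁻¹ ≤ 1 := by
    rw [inv_le_one_iff₀]; right; exact ha
  have hainv_pos : (0:ℝ) < a⁻¹ := inv_pos.2 ha0
  choose g hg using hsurj
  refine ⟨g, a, a * (2 * ε + b), a * (ε + b), ha, by positivity, by positivity, ?_, ?_⟩
  · intro y₁ y₂
    obtain ⟨hlow, hhigh⟩ := hiso (g y₁) (g y₂)
    have d1 := hg y₁
    have d2 := hg y₂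
    have tri1 : dist y₁ y₂ ≤ dist y₁ (f (g y₁)) + dist (f (g y₁)) (f (g y₂)) +
        dist (f (g y₂)) y₂ := dist_triangle4 _ _ _ _
    have tri2 : dist (f (g y₁)) (f (g y₂)) ≤ dist (f (g y₁)) y₁ + dist y₁ y₂ +
        dist y₂ (f (g y₂)) := dist_triangle4 _ _ _ _
    have c1 : dist (f (g y₁)) y₁ = dist y₁ (f (g y₁)) := dist_comm _ _
    have c2 : dist (f (g y₂)) y₂ = dist y₂ (f (g y₂)) := dist_comm _ _
    constructor
    · -- a⁻¹ * dist y₁ y₂ - a * (2ε + b) ≤ dist (g y₁) (g y₂)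
      have h1 : dist y₁ y₂ ≤ a * dist (g y₁) (g y₂) + b + 2 * ε := by
        nlinarith
      have h2 := mul_le_mul_of_nonneg_left h1 hainv_pos.le
      have h3 : a⁻¹ * (a * dist (g y₁) (g y₂) + b + 2 * ε) =
          dist (g y₁) (g y₂) + a⁻¹ * (b + 2 * ε) := by
        field_simp
        ring
      rw [h3] at h2
      nlinarith [dist_nonneg (x := g y₁) (y := g y₂)]
    · -- dist (g y₁) (g y₂) ≤ a * dist y₁ y₂ + a * (2ε + b)
      have h1 : a⁻¹ * dist (g y₁) (g y₂) ≤ dist y₁ y₂ + 2 * ε + b := by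
        nlinarith
      have h2 := mul_le_mul_of_nonneg_left h1 ha0.le
      rw [← mul_assoc, hainv, one_mul] at h2
      nlinarith
  · intro x
    refine ⟨f x, ?_⟩
    have hlow := (hiso x (g (f x))).1
    have d1 := hg (f x)
    have h2 := mul_le_mul_of_nonneg_left (sub_le_iff_le_add.1 hlow) ha0.le
    rw [← mul_assoc, hainv, one_mul] at h2
    have c1 : dist (f x) (f (g (f x))) = dist (f (g (f x))) (f x) := dist_comm _ _
    have c2 : dist x (g (f x)) = dist (g (f x)) x := dist_comm _ _
    nlinarith [dist_nonneg (x := x) (y := g (f x))]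

/-- Proposition 1.2.10: the asymptotic dimension is invariant under rough isometries. -/
theorem stmt14 {X Y : Type*} [MetricSpace X] [MetricSpace Y] [Nonempty X] [Nonempty Y]
    (f : X → Y) (hf : IsRoughIsometry f) :
    asympDimSpace X = asympDimSpace Y := by
  obtain ⟨g, hg⟩ := exists_rough_inverse f hf
  have h1 : ∀ (x : X) (y : Y), asympDim y ≤ asympDim x := fun x y =>
    asympDim_le_of_rough f hf x y
  have h2 : ∀ (y : Y) (x : X), asympDim x ≤ asympDim y := fun y x =>
    asympDim_le_of_rough g hg y x
  obtain ⟨x0⟩ := ‹Nonempty X›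
  obtain ⟨y0⟩ := ‹Nonempty Y›
  apply le_antisymm
  · exact iSup_le fun x => le_trans (h2 y0 x) (le_iSup _ y0)
  · exact iSup_le fun y => le_trans (h1 x0 y) (le_iSup _ x0)
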